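/- The hypergraph (Q, S) has a 2-colouring if and only if the graph G' contains C_6 as a contraction. -/

import Mathlib

/-- `W` is an `H`-witness structure of `G`: a family of pairwise disjoint nonempty
connected subsets of `V(G)` covering `V(G)` such that distinct `h₁ h₂` are adjacent in `H`
iff there is an edge of `G` between `W h₁` and `W h₂`. -/
def IsWitnessStructure {V U : Type*} (G : SimpleGraph V) (H : SimpleGraph U)
    (W : U → Set V) : Prop :=
  (∀ h, (W h).Nonempty) ∧
  (∀ h₁ h₂, h₁ ≠ h₂ → Disjoint (W h₁) (W h₂)) ∧
  (⋃ h, W h) = Set.univ ∧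
  (∀ h, (G.induce (W h)).Connected) ∧
  (∀ h₁ h₂, h₁ ≠ h₂ → ((∃ a ∈ W h₁, ∃ b ∈ W h₂, G.Adj a b) ↔ H.Adj h₁ h₂))

/-- `G` contains `H` as a contraction. -/
def ContainsAsContraction {V U : Type*} (G : SimpleGraph V) (H : SimpleGraph U) : Prop :=
  ∃ W : U → Set V, IsWitnessStructure G H W

/-- Raw vertex names for the graph `G'`: `G(Q,S)` with `q*` and `u₂` deleted and a new
vertex `x` added (adjacent to `v` and `w`). -/
inductive HVertex' (m n : ℕ) : Type
  | elt : Fin m → HVertex' m n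
  | hyp : Fin n → HVertex' m n
  | copy : Fin n → HVertex' m n
  | sub : Fin m → Fin n → HVertex' m n
  | u1 : HVertex' m n
  | x : HVertex' m n
  | v : HVertex' m n
  | w : HVertex' m n

/-- A raw vertex name is an actual vertex of `G'`: the subdivision vertex `q^i_j`
exists only when `q_i ∈ S_j`. -/
def HVertex'.OK {m n : ℕ} (S : Fin n → Set (Fin m)) : HVertex' m n → Prop
  | .sub i j => i ∈ S j
  | _ => True

/-- The vertex set of `G'`. -/
def GVertex' {m n : ℕ} (S : Fin n → Set (Fin m)) : Type := {y : HVertex' m n // y.OK S}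

/-- The (asymmetrically listed) edges of `G'`:
`q^i_j q_i`, `q^i_j S_j`, `q_i S_j'` (for `q_i ∈ S_j`), `S_j S_k'` (all `j,k`),
`u₁ S_j`, `u₁ v`, `x v`, `x w`, `w S_j'`. -/
def baseAdj' {m n : ℕ} (S : Fin n → Set (Fin m)) : HVertex' m n → HVertex' m n → Prop
  | .sub i _, .elt i' => i = i'
  | .sub _ j, .hyp j' => j = j'
  | .elt i, .copy j => i ∈ S j
  | .hyp _, .copy _ => True
  | .u1, .hyp _ => True
  | .u1, .v => True
  | .x, .v => True
  | .x, .w => True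
  | .w, .copy _ => True
  | _, _ => False

/-- The graph `G'`. -/
def GQS' {m n : ℕ} (S : Fin n → Set (Fin m)) : SimpleGraph (GVertex' S) :=
  SimpleGraph.fromRel (fun a b => baseAdj' S a.1 b.1)

/-- `(Q₁, Q₂)` is a 2-colouring of the hypergraph `(Q, S)`: a partition of `Q` such that
every hyperedge meets both parts. -/
def IsTwoColouring {m n : ℕ} (S : Fin n → Set (Fin m)) (Q₁ Q₂ : Set (Fin m)) : Prop :=
  Q₁ ∪ Q₂ = Set.univ ∧ Disjoint Q₁ Q₂ ∧ ∀ j, (Q₁ ∩ S j).Nonempty ∧ (Q₂ ∩ S j).Nonempty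


open SimpleGraph

variable {m n : ℕ} {S : Fin n → Set (Fin m)}

lemma nsub1_lt {n : ℕ} (hn : 2 ≤ n) : n - 1 < n := by omega

/-! ### vertex abbreviations -/

def eV (i : Fin m) : GVertex' S := ⟨.elt i, trivial⟩
def hV (j : Fin n) : GVertex' S := ⟨.hyp j, trivial⟩
def cV (j : Fin n) : GVertex' S := ⟨.copy j, trivial⟩
def sV {i : Fin m} {j : Fin n} (h : i ∈ S j) : GVertex' S := ⟨.sub i j, h⟩
def u1V : GVertex' S := ⟨.u1, trivial⟩
def xV : GVertex' S := ⟨.x, trivial⟩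
def vV : GVertex' S := ⟨.v, trivial⟩
def wV : GVertex' S := ⟨.w, trivial⟩

lemma adj_iff (a b : GVertex' S) :
    (GQS' S).Adj a b ↔ a ≠ b ∧ (baseAdj' S a.1 b.1 ∨ baseAdj' S b.1 a.1) :=
  Iff.rfl

lemma ne_of_raw {a b : GVertex' S} (h : a.1 ≠ b.1) : a ≠ b := fun e => h (by rw [e])

/-! ### generic helpers -/

lemma walk_prop {V : Type*} {G : SimpleGraph V} (p : V → Prop)
    (hp : ∀ a b, G.Adj a b → p a → p b) : ∀ {a b : V}, G.Walk a b → p a → p b := by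
  intro a b w
  induction w with
  | nil => exact id
  | cons h _ ih => exact fun ha => ih (hp _ _ h ha)

lemma first_step {V : Type*} {G : SimpleGraph V} {a b : V} (h : G.Reachable a b)
    (hne : a ≠ b) : ∃ c, G.Adj a c := by
  obtain ⟨w⟩ := h
  cases w with
  | nil => exact absurd rfl hne
  | cons h _ => exact ⟨_, h⟩

lemma connected_of_hub {V : Type*} {G : SimpleGraph V} {s : Set V} {h0 : V} (hh : h0 ∈ s)
    (hr : ∀ z (hz : z ∈ s), (G.induce s).Reachable ⟨z, hz⟩ ⟨h0, hh⟩) :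
    (G.induce s).Connected := by
  rw [connected_iff_exists_forall_reachable]
  exact ⟨⟨h0, hh⟩, fun w => (hr w.1 w.2).symm⟩

lemma induce_adj' {s : Set (GVertex' S)} {a b : GVertex' S} (ha : a ∈ s) (hb : b ∈ s)
    (h : (GQS' S).Adj a b) : ((GQS' S).induce s).Adj ⟨a, ha⟩ ⟨b, hb⟩ := h



/-- which bag each raw vertex goes into, forward construction -/
def bagF (Q₁ Q₂ : Set (Fin m)) : HVertex' m n → Fin 6 → Prop
  | .v => fun k => k = 0
  | .u1 => fun k => k = 1
  | .hyp _ => fun k => k = 2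
  | .sub _ _ => fun k => k = 2
  | .elt i => fun k => (i ∈ Q₁ ∧ k = 2) ∨ (i ∈ Q₂ ∧ k = 3)
  | .copy _ => fun k => k = 3
  | .w => fun k => k = 4
  | .x => fun k => k = 5

def WF (S : Fin n → Set (Fin m)) (Q₁ Q₂ : Set (Fin m)) (k : Fin 6) : Set (GVertex' S) :=
  {z | bagF Q₁ Q₂ z.1 k}

lemma bag_adm {Q₁ Q₂ : Set (Fin m)} (a b : GVertex' S) (hab : (GQS' S).Adj a b)
    (k k' : Fin 6) (ha : a ∈ WF S Q₁ Q₂ k) (hb : b ∈ WF S Q₁ Q₂ k') :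
    k = k' ∨ (SimpleGraph.cycleGraph 6).Adj k k' := by
  obtain ⟨hne, h | h⟩ := hab <;>
    rcases a with ⟨ya, oka⟩ <;> rcases b with ⟨yb, okb⟩ <;>
    cases ya <;> cases yb <;>
    simp only [WF, bagF, Set.mem_setOf_eq, baseAdj'] at ha hb h <;>
    first
      | exact h.elim
      | (rcases ha with ⟨_, ha⟩ | ⟨_, ha⟩ <;> rcases hb with ⟨_, hb⟩ | ⟨_, hb⟩ <;>
          subst ha <;> subst hb <;> decide)
      | (rcases ha with ⟨_, ha⟩ | ⟨_, ha⟩ <;> subst ha <;> subst hb <;> decide)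
      | (rcases hb with ⟨_, hb⟩ | ⟨_, hb⟩ <;> subst ha <;> subst hb <;> decide)
      | (subst ha <;> subst hb <;> decide)



/-! ### adjacency constructors -/

lemma adj_sub_elt {i : Fin m} {j : Fin n} (h : i ∈ S j) : (GQS' S).Adj (sV h) (eV i) :=
  ⟨ne_of_raw nofun, Or.inl rfl⟩
lemma adj_sub_hyp {i : Fin m} {j : Fin n} (h : i ∈ S j) : (GQS' S).Adj (sV h) (hV j) :=
  ⟨ne_of_raw nofun, Or.inl rfl⟩
lemma adj_elt_copy {i : Fin m} {j : Fin n} (h : i ∈ S j) : (GQS' S).Adj (eV i) (cV j) :=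
  ⟨ne_of_raw nofun, Or.inl h⟩
lemma adj_hyp_copy (j k : Fin n) : (GQS' S).Adj (hV j) (cV k) :=
  ⟨ne_of_raw nofun, Or.inl trivial⟩
lemma adj_u1_hyp (j : Fin n) : (GQS' S).Adj u1V (hV j) :=
  ⟨ne_of_raw nofun, Or.inl trivial⟩
lemma adj_u1_v : (GQS' S).Adj u1V vV := ⟨ne_of_raw nofun, Or.inl trivial⟩
lemma adj_x_v : (GQS' S).Adj xV vV := ⟨ne_of_raw nofun, Or.inl trivial⟩
lemma adj_x_w : (GQS' S).Adj xV wV := ⟨ne_of_raw nofun, Or.inl trivial⟩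
lemma adj_w_copy (j : Fin n) : (GQS' S).Adj wV (cV j) := ⟨ne_of_raw nofun, Or.inl trivial⟩


lemma reach_of_eq {V : Type*} {G : SimpleGraph V} {a b : V} (h : a = b) : G.Reachable a b :=
  h ▸ Reachable.refl a

section Forward

variable {Q₁ Q₂ : Set (Fin m)}

lemma forward (hn : 2 ≤ n) (hSlast : S ⟨n - 1, nsub1_lt hn⟩ = Set.univ)
    (hQ : IsTwoColouring S Q₁ Q₂) :
    IsWitnessStructure (GQS' S) (SimpleGraph.cycleGraph 6) (WF S Q₁ Q₂) := by
  obtain ⟨hQu, hQd, hQne⟩ := hQ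
  have hj0 : (0 : ℕ) < n := by omega
  set j0 : Fin n := ⟨0, hj0⟩ with hj0'
  set jl : Fin n := ⟨n - 1, nsub1_lt hn⟩ with hjl'
  have hmem : ∀ i : Fin m, i ∈ S jl := by rw [hSlast]; intro i; trivial
  refine ⟨?_, ?_, ?_, ?_, ?_⟩
  · -- nonempty
    intro k
    fin_cases k
    · exact ⟨vV, rfl⟩
    · exact ⟨u1V, rfl⟩
    · exact ⟨hV j0, rfl⟩
    · exact ⟨cV j0, rfl⟩
    · exact ⟨wV, rfl⟩
    · exact ⟨xV, rfl⟩
  · -- disjoint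
    intro k k' hkk'
    rw [Set.disjoint_left]
    rintro ⟨y, oky⟩ ha hb
    apply hkk'
    cases y <;> simp only [WF, bagF, Set.mem_setOf_eq] at ha hb
    case elt i =>
      rcases ha with ⟨hi1, ha⟩ | ⟨hi2, ha⟩ <;> rcases hb with ⟨hi1', hb⟩ | ⟨hi2', hb⟩ <;>
        subst ha <;> subst hb
      · rfl
      · exact (Set.disjoint_left.mp hQd hi1 hi2').elim
      · exact (Set.disjoint_left.mp hQd hi1' hi2).elim
      · rfl
    all_goals (subst ha; subst hb; rfl)
  · -- union
    ext z
    simp only [Set.mem_iUnion, Set.mem_univ, iff_true]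
    obtain ⟨y, oky⟩ := z
    cases y
    case elt i =>
      have : i ∈ Q₁ ∪ Q₂ := by rw [hQu]; trivial
      rcases this with hi | hi
      · exact ⟨2, Or.inl ⟨hi, rfl⟩⟩
      · exact ⟨3, Or.inr ⟨hi, rfl⟩⟩
    case hyp j => exact ⟨2, rfl⟩
    case copy j => exact ⟨3, rfl⟩
    case sub i j => exact ⟨2, rfl⟩
    case u1 => exact ⟨1, rfl⟩
    case x => exact ⟨5, rfl⟩
    case v => exact ⟨0, rfl⟩
    case w => exact ⟨4, rfl⟩
  · -- connected
    intro k
    fin_cases k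
    -- bag 0 : {v}
    · refine connected_of_hub (h0 := vV) rfl ?_
      rintro ⟨y, oky⟩ hz
      cases y <;> first
        | exact reach_of_eq rfl
        | (simp only [WF, bagF, Set.mem_setOf_eq] at hz
           first
             | exact absurd hz (by decide)
             | (rcases hz with ⟨_, h⟩ | ⟨_, h⟩ <;> exact absurd h (by decide)))
    -- bag 1 : {u1}
    · refine connected_of_hub (h0 := u1V) rfl ?_
      rintro ⟨y, oky⟩ hz
      cases y <;> first
        | exact reach_of_eq rfl
        | (simp only [WF, bagF, Set.mem_setOf_eq] at hz
           first
             | exact absurd hz (by decide)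
             | (rcases hz with ⟨_, h⟩ | ⟨_, h⟩ <;> exact absurd h (by decide)))
    -- bag 2 : hyps ∪ subs ∪ Q₁-elts, hub hV jl
    · refine connected_of_hub (h0 := hV jl) rfl ?_
      have hhub : hV jl ∈ WF S Q₁ Q₂ 2 := rfl
      -- reach from any elt with i ∈ Q₁
      have reach_elt : ∀ i : Fin m, i ∈ Q₁ → ∀ (hz : eV i ∈ WF S Q₁ Q₂ 2),
          ((GQS' S).induce (WF S Q₁ Q₂ 2)).Reachable ⟨eV i, hz⟩ ⟨hV jl, hhub⟩ := by
        intro i hi hz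
        have hs : sV (hmem i) ∈ WF S Q₁ Q₂ 2 := rfl
        exact ((induce_adj' hz hs ((adj_sub_elt (hmem i)).symm)).reachable).trans
          (induce_adj' hs hhub (adj_sub_hyp (hmem i))).reachable
      have reach_hyp : ∀ j : Fin n, ∀ (hz : hV j ∈ WF S Q₁ Q₂ 2),
          ((GQS' S).induce (WF S Q₁ Q₂ 2)).Reachable ⟨hV j, hz⟩ ⟨hV jl, hhub⟩ := by
        intro j hz
        obtain ⟨i, hi1, hiS⟩ := (hQne j).1
        have hs : sV hiS ∈ WF S Q₁ Q₂ 2 := rfl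
        have he : eV i ∈ WF S Q₁ Q₂ 2 := Or.inl ⟨hi1, rfl⟩
        exact ((induce_adj' hz hs ((adj_sub_hyp hiS).symm)).reachable).trans
          (((induce_adj' hs he (adj_sub_elt hiS)).reachable).trans (reach_elt i hi1 he))
      rintro ⟨y, oky⟩ hz
      cases y
      case hyp j => exact reach_hyp j hz
      case sub i j =>
        exact ((induce_adj' hz rfl (adj_sub_hyp oky)).reachable).trans (reach_hyp j rfl)
      case elt i =>
        have hz' := hz
        rcases hz' with ⟨hi, _⟩ | ⟨_, h⟩
        · exact reach_elt i hi hz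
        · exact absurd h (by decide)
      all_goals (simp only [WF, bagF, Set.mem_setOf_eq] at hz; exact absurd (congrArg Fin.val hz) (by decide))
    -- bag 3 : copies ∪ Q₂-elts, hub cV jl
    · refine connected_of_hub (h0 := cV jl) rfl ?_
      have hhub : cV jl ∈ WF S Q₁ Q₂ 3 := rfl
      have reach_elt : ∀ i : Fin m, i ∈ Q₂ → ∀ (hz : eV i ∈ WF S Q₁ Q₂ 3),
          ((GQS' S).induce (WF S Q₁ Q₂ 3)).Reachable ⟨eV i, hz⟩ ⟨cV jl, hhub⟩ := by
        intro i hi hz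
        exact (induce_adj' hz hhub (adj_elt_copy (hmem i))).reachable
      rintro ⟨y, oky⟩ hz
      cases y
      case copy j =>
        obtain ⟨i, hi2, hiS⟩ := (hQne j).2
        have he : eV i ∈ WF S Q₁ Q₂ 3 := Or.inr ⟨hi2, rfl⟩
        exact ((induce_adj' hz he ((adj_elt_copy hiS).symm)).reachable).trans
          (reach_elt i hi2 he)
      case elt i =>
        have hz' := hz
        rcases hz' with ⟨_, h⟩ | ⟨hi, _⟩
        · exact absurd h (by decide)
        · exact reach_elt i hi hz
      all_goals (simp only [WF, bagF, Set.mem_setOf_eq] at hz; exact absurd (congrArg Fin.val hz) (by decide))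
    -- bag 4 : {w}
    · refine connected_of_hub (h0 := wV) rfl ?_
      rintro ⟨y, oky⟩ hz
      cases y <;> first
        | exact reach_of_eq rfl
        | (simp only [WF, bagF, Set.mem_setOf_eq] at hz
           first
             | exact absurd hz (by decide)
             | (rcases hz with ⟨_, h⟩ | ⟨_, h⟩ <;> exact absurd h (by decide)))
    -- bag 5 : {x}
    · refine connected_of_hub (h0 := xV) rfl ?_
      rintro ⟨y, oky⟩ hz
      cases y <;> first
        | exact reach_of_eq rfl
        | (simp only [WF, bagF, Set.mem_setOf_eq] at hz
           first
             | exact absurd hz (by decide)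
             | (rcases hz with ⟨_, h⟩ | ⟨_, h⟩ <;> exact absurd h (by decide)))
  · -- adjacency iff
    intro h₁ h₂ hne
    fin_cases h₁ <;> fin_cases h₂ <;>
      first
        | exact absurd rfl hne
        | (refine iff_of_false ?_ (by decide)
           rintro ⟨a, ha, b, hb, hab⟩
           rcases bag_adm a b hab _ _ ha hb with h | h
           · exact absurd h (by decide)
           · exact absurd h (by decide))
        | skip
    · exact iff_of_true ⟨vV, rfl, u1V, rfl, adj_u1_v.symm⟩ (by decide)
    · exact iff_of_true ⟨vV, rfl, xV, rfl, adj_x_v.symm⟩ (by decide)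
    · exact iff_of_true ⟨u1V, rfl, vV, rfl, adj_u1_v⟩ (by decide)
    · exact iff_of_true ⟨u1V, rfl, hV j0, rfl, adj_u1_hyp j0⟩ (by decide)
    · exact iff_of_true ⟨hV j0, rfl, u1V, rfl, (adj_u1_hyp j0).symm⟩ (by decide)
    · exact iff_of_true ⟨hV j0, rfl, cV j0, rfl, adj_hyp_copy j0 j0⟩ (by decide)
    · exact iff_of_true ⟨cV j0, rfl, hV j0, rfl, (adj_hyp_copy j0 j0).symm⟩ (by decide)
    · exact iff_of_true ⟨cV j0, rfl, wV, rfl, (adj_w_copy j0).symm⟩ (by decide)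
    · exact iff_of_true ⟨wV, rfl, cV j0, rfl, adj_w_copy j0⟩ (by decide)
    · exact iff_of_true ⟨wV, rfl, xV, rfl, adj_x_w.symm⟩ (by decide)
    · exact iff_of_true ⟨xV, rfl, vV, rfl, adj_x_v⟩ (by decide)
    · exact iff_of_true ⟨xV, rfl, wV, rfl, adj_x_w⟩ (by decide)

end Forward

/-! ### neighbour characterizations -/

lemma raw_eq {z : GVertex' S} {y : HVertex' m n} (oky : (HVertex'.OK S) y) (h : z.1 = y) :
    z = ⟨y, oky⟩ := Subtype.ext h

lemma nbr_v {a : GVertex' S} (h : (GQS' S).Adj a vV) : a = u1V ∨ a = xV := by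
  obtain ⟨ya, oka⟩ := a
  obtain ⟨hne, h | h⟩ := h <;> cases ya <;> simp only [baseAdj'] at h <;>
    first
      | exact Or.inl rfl
      | exact Or.inr rfl
      | exact h.elim

lemma nbr_elt {a : GVertex' S} {i : Fin m} (h : (GQS' S).Adj a (eV i)) :
    (∃ k, a.1 = .copy k ∧ i ∈ S k) ∨ (∃ j, a.1 = .sub i j) := by
  obtain ⟨ya, oka⟩ := a
  obtain ⟨hne, h | h⟩ := h <;> cases ya <;> simp only [baseAdj'] at h <;>
    first
      | exact h.elim
      | (exact Or.inl ⟨_, rfl, h⟩)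
      | (subst h; exact Or.inr ⟨_, rfl⟩)

lemma nbr_sub {a : GVertex' S} {i : Fin m} {j : Fin n} {hij : i ∈ S j}
    (h : (GQS' S).Adj a (sV hij)) : a.1 = .hyp j ∨ a.1 = .elt i := by
  obtain ⟨ya, oka⟩ := a
  obtain ⟨hne, h | h⟩ := h <;> cases ya <;> simp only [baseAdj'] at h <;>
    first
      | exact h.elim
      | (subst h; exact Or.inl rfl)
      | (subst h; exact Or.inr rfl)

lemma nbr_hyp {a : GVertex' S} {j : Fin n} (h : (GQS' S).Adj a (hV j)) :
    a.1 = .u1 ∨ (∃ k, a.1 = .copy k) ∨ (∃ i, a.1 = .sub i j) := by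
  obtain ⟨ya, oka⟩ := a
  obtain ⟨hne, h | h⟩ := h <;> cases ya <;> simp only [baseAdj'] at h <;>
    first
      | exact h.elim
      | exact Or.inl rfl
      | exact Or.inr (Or.inl ⟨_, rfl⟩)
      | (subst h; exact Or.inr (Or.inr ⟨_, rfl⟩))

lemma nbr_copy {a : GVertex' S} {k : Fin n} (h : (GQS' S).Adj a (cV k)) :
    (∃ i, a.1 = .elt i ∧ i ∈ S k) ∨ (∃ j, a.1 = .hyp j) ∨ a.1 = .w := by
  obtain ⟨ya, oka⟩ := a
  obtain ⟨hne, h | h⟩ := h <;> cases ya <;> simp only [baseAdj'] at h <;>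
    first
      | exact h.elim
      | exact Or.inl ⟨_, rfl, h⟩
      | exact Or.inr (Or.inl ⟨_, rfl⟩)
      | exact Or.inr (Or.inr rfl)

/-! ### witness transport -/

lemma witness_comp {V : Type*} {G : SimpleGraph V} {W : Fin 6 → Set V}
    (hW : IsWitnessStructure G (SimpleGraph.cycleGraph 6) W) (σ : Fin 6 ≃ Fin 6)
    (hσ : ∀ i j, (SimpleGraph.cycleGraph 6).Adj (σ i) (σ j) ↔
      (SimpleGraph.cycleGraph 6).Adj i j) :
    IsWitnessStructure G (SimpleGraph.cycleGraph 6) (fun k => W (σ k)) := by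
  obtain ⟨h1, h2, h3, h4, h5⟩ := hW
  refine ⟨fun k => h1 _, fun k k' hkk' => h2 _ _ (fun e => hkk' (σ.injective e)), ?_,
    fun k => h4 _, ?_⟩
  · rw [← h3]
    exact σ.surjective.iUnion_comp W
  · intro k k' hkk'
    rw [h5 _ _ (fun e => hkk' (σ.injective e)), hσ]

/-! ### reverse direction: bag machinery -/

section Reverse

variable {W : Fin 6 → Set (GVertex' S)}

lemma bag_uniq (hW : IsWitnessStructure (GQS' S) (SimpleGraph.cycleGraph 6) W)
    {z : GVertex' S} {k k' : Fin 6} (h : z ∈ W k) (h' : z ∈ W k') : k = k' := by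
  by_contra hne
  exact Set.disjoint_left.mp (hW.2.1 _ _ hne) h h'

lemma bag_ex (hW : IsWitnessStructure (GQS' S) (SimpleGraph.cycleGraph 6) W)
    (z : GVertex' S) : ∃ k, z ∈ W k := by
  have := hW.2.2.1
  have hz : z ∈ ⋃ k, W k := by rw [this]; trivial
  exact Set.mem_iUnion.mp hz

lemma adj_bag (hW : IsWitnessStructure (GQS' S) (SimpleGraph.cycleGraph 6) W)
    {a b : GVertex' S} {k k' : Fin 6} (hab : (GQS' S).Adj a b) (ha : a ∈ W k)
    (hb : b ∈ W k') : k = k' ∨ (SimpleGraph.cycleGraph 6).Adj k k' := by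
  by_cases h : k = k'
  · exact Or.inl h
  · exact Or.inr ((hW.2.2.2.2 k k' h).mp ⟨a, ha, b, hb, hab⟩)

lemma edge_ex (hW : IsWitnessStructure (GQS' S) (SimpleGraph.cycleGraph 6) W)
    {k k' : Fin 6} (hne : k ≠ k') (hadj : (SimpleGraph.cycleGraph 6).Adj k k') :
    ∃ a ∈ W k, ∃ b ∈ W k', (GQS' S).Adj a b :=
  (hW.2.2.2.2 k k' hne).mpr hadj

/-- every vertex except `v` is within distance 2 of `cV jl` -/
lemma two_step (hn : 2 ≤ n) (hSlast : S ⟨n - 1, nsub1_lt hn⟩ = Set.univ) (z : GVertex' S)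
    (hz : z.1 ≠ .v) :
    z = cV ⟨n - 1, nsub1_lt hn⟩ ∨ (GQS' S).Adj (cV ⟨n - 1, nsub1_lt hn⟩) z ∨
      ∃ y, (GQS' S).Adj (cV ⟨n - 1, nsub1_lt hn⟩) y ∧ (GQS' S).Adj y z := by
  set jl : Fin n := ⟨n - 1, nsub1_lt hn⟩
  set j0 : Fin n := ⟨0, by omega⟩
  have hmem : ∀ i : Fin m, i ∈ S jl := by rw [show S jl = Set.univ from hSlast]; intro i; trivial
  obtain ⟨yz, okz⟩ := z
  cases yz
  case elt i => exact Or.inr (Or.inl (adj_elt_copy (hmem i)).symm)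
  case hyp j => exact Or.inr (Or.inl (adj_hyp_copy j jl).symm)
  case copy k => exact Or.inr (Or.inr ⟨hV j0, (adj_hyp_copy j0 jl).symm, adj_hyp_copy j0 k⟩)
  case sub i j =>
    exact Or.inr (Or.inr ⟨hV j, (adj_hyp_copy j jl).symm, (adj_sub_hyp okz).symm⟩)
  case u1 => exact Or.inr (Or.inr ⟨hV j0, (adj_hyp_copy j0 jl).symm, (adj_u1_hyp j0).symm⟩)
  case w => exact Or.inr (Or.inl (adj_w_copy jl).symm)
  case x => exact Or.inr (Or.inr ⟨wV, (adj_w_copy jl).symm, adj_x_w.symm⟩)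
  case v => exact absurd rfl hz

/-- the bag opposite to the one containing `cV jl` contains only `v` -/
lemma opp_bag (hn : 2 ≤ n) (hSlast : S ⟨n - 1, nsub1_lt hn⟩ = Set.univ)
    (hW : IsWitnessStructure (GQS' S) (SimpleGraph.cycleGraph 6) W)
    {t : Fin 6} (hc : cV ⟨n - 1, nsub1_lt hn⟩ ∈ W t) {z : GVertex' S}
    (hz : z ∈ W (t + 3)) : z = vV := by
  by_contra hne
  have hzv : z.1 ≠ .v := fun h => hne (Subtype.ext h)
  rcases two_step hn hSlast z hzv with h | h | ⟨y, h1, h2⟩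
  · subst h
    exact (by decide : ∀ t : Fin 6, ¬(t = t + 3)) t (bag_uniq hW hc hz)
  · exact (by decide : ∀ t : Fin 6, ¬(t = t + 3 ∨ (SimpleGraph.cycleGraph 6).Adj t (t + 3))) t
      (adj_bag hW h hc hz)
  · obtain ⟨s, hy⟩ := bag_ex hW y
    exact (by decide : ∀ t s : Fin 6,
        ¬((t = s ∨ (SimpleGraph.cycleGraph 6).Adj t s) ∧
          (s = t + 3 ∨ (SimpleGraph.cycleGraph 6).Adj s (t + 3)))) t s
      ⟨adj_bag hW h1 hc hy, adj_bag hW h2 hy hz⟩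

/-- `x` lies two steps away (either side) from the bag of `cV jl` -/
lemma locate (hn : 2 ≤ n) (hSlast : S ⟨n - 1, nsub1_lt hn⟩ = Set.univ)
    (hW : IsWitnessStructure (GQS' S) (SimpleGraph.cycleGraph 6) W)
    {t : Fin 6} (hc : cV ⟨n - 1, nsub1_lt hn⟩ ∈ W t) :
    xV ∈ W (t + 2) ∨ xV ∈ W (t + 4) := by
  obtain ⟨a2, ha2, b2, hb2, hab2⟩ := edge_ex hW
    ((by decide : ∀ t : Fin 6, t + 2 ≠ t + 3) t)
    ((by decide : ∀ t : Fin 6, (SimpleGraph.cycleGraph 6).Adj (t + 2) (t + 3)) t)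
  obtain ⟨a4, ha4, b4, hb4, hab4⟩ := edge_ex hW
    ((by decide : ∀ t : Fin 6, t + 4 ≠ t + 3) t)
    ((by decide : ∀ t : Fin 6, (SimpleGraph.cycleGraph 6).Adj (t + 4) (t + 3)) t)
  rw [opp_bag hn hSlast hW hc hb2] at hab2
  rw [opp_bag hn hSlast hW hc hb4] at hab4
  rcases nbr_v hab2 with h2 | h2 <;> rcases nbr_v hab4 with h4 | h4
  · subst h2; subst h4
    exact absurd (bag_uniq hW ha2 ha4) ((by decide : ∀ t : Fin 6, ¬(t + 2 = t + 4)) t)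
  · subst h4; exact Or.inr ha4
  · subst h2; exact Or.inl ha2
  · subst h2; exact Or.inl ha2

end Reverse

section Extract

variable {W : Fin 6 → Set (GVertex' S)}

lemma extract (hn : 2 ≤ n) (hSne : ∀ j, (S j).Nonempty)
    (hSlast : S ⟨n - 1, nsub1_lt hn⟩ = Set.univ)
    (hW : IsWitnessStructure (GQS' S) (SimpleGraph.cycleGraph 6) W)
    (hc : cV ⟨n - 1, nsub1_lt hn⟩ ∈ W 0) (hx : xV ∈ W 4) :
    ∃ Q₁ Q₂ : Set (Fin m), IsTwoColouring S Q₁ Q₂ := by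
  set jl : Fin n := ⟨n - 1, nsub1_lt hn⟩ with hjl
  set j0 : Fin n := ⟨0, by omega⟩ with hj0
  have hj0l : j0 ≠ jl := by
    simp only [hj0, hjl, ne_eq, Fin.mk.injEq]
    omega
  have h03 : (0 : Fin 6) + 3 = 3 := by decide
  have hv3 : ∀ z ∈ W 3, z = vV := fun z hz =>
    opp_bag hn hSlast hW hc (by rw [h03]; exact hz)
  have hvv : vV ∈ W 3 := by
    obtain ⟨z, hz⟩ := hW.1 3
    have := hv3 z hz
    rwa [this] at hz
  have hu1 : u1V ∈ W 2 := by
    obtain ⟨a, ha, b, hb, hab⟩ := edge_ex hW (by decide)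
      (by decide : (SimpleGraph.cycleGraph 6).Adj 2 3)
    rw [hv3 b hb] at hab
    rcases nbr_v hab with h | h
    · rwa [h] at ha
    · rw [h] at ha
      exact absurd (bag_uniq hW ha hx) (by decide)
  have hnotv : ∀ (z : GVertex' S) (k : Fin 6), z.1 ≠ .v → z ∈ W k → k ≠ 3 := by
    intro z k hzv hzk h3
    subst h3
    exact hzv (congrArg Subtype.val (hv3 z hzk))
  have hw5 : wV ∈ W 5 := by
    obtain ⟨s, hs⟩ := bag_ex hW wV
    have e1 := adj_bag hW adj_x_w hx hs
    have e2 := adj_bag hW (adj_w_copy jl) hs hc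
    have e3 := hnotv wV s nofun hs
    have hs5 : s = 5 := by clear hs; revert s; decide
    rwa [hs5] at hs
  have hhyp : ∀ j, hV j ∈ W 1 := by
    intro j
    obtain ⟨s, hs⟩ := bag_ex hW (hV j)
    have e1 := adj_bag hW (adj_u1_hyp j) hu1 hs
    have e2 := adj_bag hW (adj_hyp_copy j jl) hs hc
    have e3 := hnotv (hV j) s nofun hs
    have hs1 : s = 1 := by clear hs; revert s; decide
    rwa [hs1] at hs
  have hcopy : ∀ k, cV k ∈ W 0 := by
    intro k
    obtain ⟨s, hs⟩ := bag_ex hW (cV k)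
    have e1 := adj_bag hW (adj_hyp_copy j0 k) (hhyp j0) hs
    have e2 := adj_bag hW (adj_w_copy k) hw5 hs
    have hs0 : s = 0 := by clear hs; revert s; decide
    rwa [hs0] at hs
  have hsub0 : ∀ {i : Fin m} {j : Fin n} (hij : i ∈ S j),
      ∃ s, sV hij ∈ W s ∧ (s = 0 ∨ s = 1 ∨ s = 2) := by
    intro i j hij
    obtain ⟨s, hs⟩ := bag_ex hW (sV hij)
    have e1 := adj_bag hW (adj_sub_hyp hij) hs (hhyp j)
    have e3 := hnotv _ s (fun h => nomatch (h : HVertex'.sub i j = .v)) hs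
    refine ⟨s, hs, ?_⟩
    clear hs; revert s; decide
  have hmem : ∀ i : Fin m, i ∈ S jl := by
    rw [show S jl = Set.univ from hSlast]; intro i; trivial
  have helt : ∀ i, eV i ∈ W 0 ∨ eV i ∈ W 1 := by
    intro i
    obtain ⟨s, hs⟩ := bag_ex hW (eV i)
    have e1 := adj_bag hW (adj_elt_copy (hmem i)) hs hc
    have e3 := hnotv _ s (fun h => nomatch (h : HVertex'.elt i = .v)) hs
    have e5 : s ≠ 5 := by
      intro h5
      subst h5
      have hne : (⟨eV i, hs⟩ : ↥(W 5)) ≠ ⟨wV, hw5⟩ := fun h =>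
        nomatch (congrArg (fun z : ↥(W 5) => z.1.1) h : HVertex'.elt i = HVertex'.w)
      obtain ⟨c, hcadj⟩ := first_step ((hW.2.2.2.1 5).preconnected _ _) hne
      have hadj : (GQS' S).Adj (eV i) c.1 := hcadj
      rcases nbr_elt hadj.symm with ⟨k, hk, hik⟩ | ⟨j, hj⟩
      · exact absurd (bag_uniq hW ((Subtype.ext hk : c.1 = cV k) ▸ c.2) (hcopy k)) (by decide)
      · have hij : i ∈ S j := by have h2 := c.1.2; rw [hj] at h2; exact h2
        obtain ⟨s', hs', hs012⟩ := hsub0 hij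
        have := bag_uniq hW ((Subtype.ext hj : c.1 = sV hij) ▸ c.2) hs'
        revert hs012
        rw [← this]
        decide
    have : s = 0 ∨ s = 1 := by clear hs; revert s; decide
    rcases this with h | h
    · subst h; exact Or.inl hs
    · subst h; exact Or.inr hs
  refine ⟨{i | eV i ∈ W 1}, {i | eV i ∈ W 0}, ?_, ?_, ?_⟩
  · ext i
    simp only [Set.mem_union, Set.mem_setOf_eq, Set.mem_univ, iff_true]
    exact (helt i).symm
  · rw [Set.disjoint_left]
    intro i h1 h0
    exact absurd (bag_uniq hW h1 h0) (by decide)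
  · intro j
    obtain ⟨j', hj'⟩ : ∃ j', j' ≠ j := by
      by_cases h : j = jl
      · exact ⟨j0, by rw [h]; exact hj0l⟩
      · exact ⟨jl, fun e => h e.symm⟩
    constructor
    · -- Q₁ ∩ S j nonempty
      by_contra hemp
      have hclosed : ∀ a b : ↥(W 1), ((GQS' S).induce (W 1)).Adj a b →
          (a.1.1 = .hyp j ∨ ∃ i, a.1.1 = .sub i j) →
          (b.1.1 = .hyp j ∨ ∃ i, b.1.1 = .sub i j) := by
        intro a b hab hpa
        rcases hpa with ha | ⟨i, ha⟩
        · have hadj : (GQS' S).Adj (hV j) b.1 :=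
            (Subtype.ext ha : a.1 = hV j) ▸ (hab : (GQS' S).Adj a.1 b.1)
          rcases nbr_hyp hadj.symm with h | ⟨k, h⟩ | ⟨i, h⟩
          · exact absurd (bag_uniq hW ((Subtype.ext h : b.1 = u1V) ▸ b.2) hu1) (by decide)
          · exact absurd (bag_uniq hW ((Subtype.ext h : b.1 = cV k) ▸ b.2) (hcopy k))
              (by decide)
          · exact Or.inr ⟨i, h⟩
        · have hij : i ∈ S j := by have h2 := a.1.2; rw [ha] at h2; exact h2
          have hadj : (GQS' S).Adj (sV hij) b.1 :=
            (Subtype.ext ha : a.1 = sV hij) ▸ (hab : (GQS' S).Adj a.1 b.1)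
          rcases nbr_sub hadj.symm with h | h
          · exact Or.inl h
          · exact absurd ⟨i, show eV i ∈ W 1 from (Subtype.ext h : b.1 = eV i) ▸ b.2, hij⟩ hemp
      obtain ⟨wk⟩ := (hW.2.2.2.1 1).preconnected ⟨hV j, hhyp j⟩ ⟨hV j', hhyp j'⟩
      have hend := walk_prop _ hclosed wk (Or.inl rfl)
      rcases hend with h | ⟨i, h⟩
      · exact hj' (by injection h)
      · exact nomatch h
    · -- Q₂ ∩ S j nonempty
      by_contra hemp
      have hne : (⟨cV j, hcopy j⟩ : ↥(W 0)) ≠ ⟨cV j', hcopy j'⟩ := by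
        intro h
        have := congrArg (fun z : ↥(W 0) => z.1.1) h
        have hjj : j = j' := by injection this
        exact hj' hjj.symm
      obtain ⟨c, hcadj⟩ := first_step ((hW.2.2.2.1 0).preconnected _ _) hne
      have hadj : (GQS' S).Adj (cV j) c.1 := hcadj
      rcases nbr_copy hadj.symm with ⟨i, h, hik⟩ | ⟨j'', h⟩ | h
      · exact hemp ⟨i, show eV i ∈ W 0 from (Subtype.ext h : c.1 = eV i) ▸ c.2, hik⟩
      · exact absurd (bag_uniq hW ((Subtype.ext h : c.1 = hV j'') ▸ c.2) (hhyp j''))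
          (by decide)
      · exact absurd (bag_uniq hW ((Subtype.ext h : c.1 = wV) ▸ c.2) hw5) (by decide)

end Extract

/-! ### C6 automorphisms -/

def rotE (t : Fin 6) : Fin 6 ≃ Fin 6 :=
  ⟨fun i => t + i, fun i => i - t, fun i => by simp, fun i => by simp⟩

def refE (t : Fin 6) : Fin 6 ≃ Fin 6 :=
  ⟨fun i => t - i, fun i => t - i, fun i => sub_sub_cancel t i, fun i => sub_sub_cancel t i⟩

lemma rot_adj : ∀ t i j : Fin 6, (SimpleGraph.cycleGraph 6).Adj (t + i) (t + j) ↔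
    (SimpleGraph.cycleGraph 6).Adj i j := by decide

lemma ref_adj : ∀ t i j : Fin 6, (SimpleGraph.cycleGraph 6).Adj (t - i) (t - j) ↔
    (SimpleGraph.cycleGraph 6).Adj i j := by decide

theorem stmt_19' {m n : ℕ} (S : Fin n → Set (Fin m)) (hn : 2 ≤ n)
    (hSne : ∀ j, (S j).Nonempty) (hSlast : S ⟨n - 1, nsub1_lt hn⟩ = Set.univ) :
    (∃ Q₁ Q₂ : Set (Fin m), IsTwoColouring S Q₁ Q₂) ↔
      ContainsAsContraction (GQS' S) (SimpleGraph.cycleGraph 6) := by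
  constructor
  · rintro ⟨Q₁, Q₂, hQ⟩
    exact ⟨WF S Q₁ Q₂, forward hn hSlast hQ⟩
  · rintro ⟨W, hW⟩
    obtain ⟨t, hc⟩ := bag_ex hW (cV ⟨n - 1, nsub1_lt hn⟩)
    rcases locate hn hSlast hW hc with hx | hx
    · -- x ∈ W (t + 2) : reflect
      have hW' := witness_comp hW (refE t) (fun i j => ref_adj t i j)
      refine extract hn hSne hSlast hW' ?_ ?_
      · show cV _ ∈ W (t - 0)
        rwa [sub_zero]
      · show xV ∈ W (t - 4)
        rwa [(by decide : ∀ t : Fin 6, t - 4 = t + 2) t]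
    · -- x ∈ W (t + 4) : rotate
      have hW' := witness_comp hW (rotE t) (fun i j => rot_adj t i j)
      refine extract hn hSne hSlast hW' ?_ ?_
      · show cV _ ∈ W (t + 0)
        rwa [add_zero]
      · exact hx

theorem stmt_19 {m n : ℕ} (S : Fin n → Set (Fin m)) (hn : 2 ≤ n)
    (hSne : ∀ j, (S j).Nonempty) (hSlast : S ⟨n - 1, by omega⟩ = Set.univ) :
    (∃ Q₁ Q₂ : Set (Fin m), IsTwoColouring S Q₁ Q₂) ↔
      ContainsAsContraction (GQS' S) (SimpleGraph.cycleGraph 6) := by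
  exact stmt_19' S hn hSne hSlast
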